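/- arXiv:2505.04593 — 2 statements merged into one kernel-verified Lean document; each statement's English description precedes it below -/
import Mathlib

section
/- For all bicomplex numbers w and v, ‖wv‖_𝔹 ≤ √2 · ‖w‖_𝔹 · ‖v‖_𝔹. -/
open Complex MeasureTheory Set Filter intervalIntegral

noncomputable section

/-- The bicomplex numbers, as ℂ² with componentwise addition. -/
abbrev B := ℂ × ℂ

namespace Bicomplex

/-- Bicomplex multiplication: (z₁ + j z₂)(w₁ + j w₂) with j² = −1. -/
def bmul (w v : B) : B := (w.1 * v.1 - w.2 * v.2, w.1 * v.2 + w.2 * v.1)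

def bone : B := (1, 0)

/-- The imaginary unit j. -/
def jB : B := (0, 1)

/-- p⁺ = (1 + ij)/2. -/
def pplus : B := (1/2, Complex.I/2)

/-- p⁻ = (1 − ij)/2. -/
def pminus : B := (1/2, -(Complex.I/2))

/-- Embedding of ℂ into 𝔹. -/
def c2b (c : ℂ) : B := (c, 0)

/-- The idempotent component w⁺ = Sc w − i Vec w. -/
def plus (w : B) : ℂ := w.1 - Complex.I * w.2

/-- The idempotent component w⁻ = Sc w + i Vec w. -/
def minus (w : B) : ℂ := w.1 + Complex.I * w.2

/-- Bicomplex conjugation: (z₁ + j z₂)‾ = z₁ − j z₂. -/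
def bconj (w : B) : B := (w.1, -w.2)

/-- The bicomplex norm ‖w‖_𝔹 = √((|w⁺|² + |w⁻|²)/2). -/
def bnorm (w : B) : ℝ := Real.sqrt ((‖plus w‖ ^ 2 + ‖minus w‖ ^ 2) / 2)

/-- The bicomplex exponential eᵛ = p⁺ e^{v⁺} + p⁻ e^{v⁻}. -/
def bexp (v : B) : B :=
  ((Complex.exp (plus v) + Complex.exp (minus v)) / 2,
   Complex.I * (Complex.exp (plus v) - Complex.exp (minus v)) / 2)

/-- Bicomplex powers. -/
def bpow (w : B) : ℕ → B
  | 0 => bone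
  | n + 1 => bmul w (bpow w n)

/-- The open unit disk in ℂ. -/
def DD : Set ℂ := Metric.ball 0 1

/-- ∂/∂x for 𝔹-valued functions (directional real derivative along 1). -/
def dxd (f : ℂ → B) (z : ℂ) : B := fderiv ℝ f z 1

/-- ∂/∂y for 𝔹-valued functions (directional real derivative along i). -/
def dyd (f : ℂ → B) (z : ℂ) : B := fderiv ℝ f z Complex.I

/-- The bicomplex Cauchy–Riemann operator ∂̄ = (1/2)(∂/∂x + j ∂/∂y). -/
def dbar (f : ℂ → B) (z : ℂ) : B := (2 : ℂ)⁻¹ • (dxd f z + bmul jB (dyd f z))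

/-- The bicomplex operator ∂ = (1/2)(∂/∂x − j ∂/∂y). -/
def dd (f : ℂ → B) (z : ℂ) : B := (2 : ℂ)⁻¹ • (dxd f z - bmul jB (dyd f z))

/-- Wirtinger derivative ∂/∂z on 𝔹-valued functions. -/
def czB (f : ℂ → B) (z : ℂ) : B := (2 : ℂ)⁻¹ • (dxd f z - Complex.I • dyd f z)

/-- Wirtinger derivative ∂/∂z* on 𝔹-valued functions. -/
def czbarB (f : ℂ → B) (z : ℂ) : B := (2 : ℂ)⁻¹ • (dxd f z + Complex.I • dyd f z)

/-- Wirtinger derivative ∂/∂z on ℂ-valued functions. -/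
def cdz (g : ℂ → ℂ) (z : ℂ) : ℂ :=
  (2 : ℂ)⁻¹ * (fderiv ℝ g z 1 - Complex.I * fderiv ℝ g z Complex.I)

/-- Wirtinger derivative ∂/∂z* on ℂ-valued functions. -/
def cdzbar (g : ℂ → ℂ) (z : ℂ) : ℂ :=
  (2 : ℂ)⁻¹ * (fderiv ℝ g z 1 + Complex.I * fderiv ℝ g z Complex.I)

/-- The point r e^{iθ}. -/
def circ (r θ : ℝ) : ℂ := (r : ℂ) * Complex.exp (θ * Complex.I)

/-- The bicomplex Hardy condition sup_{0<r<1} ∫₀^{2π} ‖f(re^{iθ})‖_𝔹^p dθ < ∞. -/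
def HardyBound (p : ℝ) (f : ℂ → B) : Prop :=
  ∃ M : ℝ, ∀ r : ℝ, 0 < r → r < 1 →
    (∫ θ in (0:ℝ)..(2 * Real.pi), bnorm (f (circ r θ)) ^ p) ≤ M

/-- The complex Hardy condition sup_{0<r<1} ∫₀^{2π} |g(re^{iθ})|^p dθ < ∞. -/
def CHardyBound (p : ℝ) (g : ℂ → ℂ) : Prop :=
  ∃ M : ℝ, ∀ r : ℝ, 0 < r → r < 1 →
    (∫ θ in (0:ℝ)..(2 * Real.pi), ‖g (circ r θ)‖ ^ p) ≤ M

/-- Membership in L^p(D, 𝔹). -/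
def MemLpB (p : ℝ) (f : ℂ → B) : Prop :=
  IntegrableOn (fun z => bnorm (f z) ^ p) DD volume

/-- Membership in the complex L^p(D). -/
def MemLpC (p : ℝ) (g : ℂ → ℂ) : Prop :=
  IntegrableOn (fun z => ‖g z‖ ^ p) DD volume

/-- Stolz (nontangential) approach region at ω with aperture M. -/
def stolz (ω : ℂ) (M : ℝ) : Set ℂ :=
  {z | z ∈ DD ∧ ‖z - ω‖ < M * (1 - ‖z‖)}

/-- Nontangential limit of f at the boundary point ω. -/
def HasNTLimit (f : ℂ → B) (ω : ℂ) (L : B) : Prop :=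
  ∀ M : ℝ, 1 < M → Tendsto f (nhdsWithin ω (stolz ω M)) (nhds L)

/-- The bicomplex Theodorescu operator. -/
def TB (f : ℂ → B) (z : ℂ) : B :=
  (-(1 / Real.pi)) •
    ((∫ ζ in DD, ((ζ - z)⁻¹ : ℂ) • f ζ) +
     (∫ ζ in DD, ((starRingEnd ℂ ζ - starRingEnd ℂ z)⁻¹ : ℂ) • bconj (f ζ)))

/-- Membership in the Sobolev space W^{m,q}(D, 𝔹). -/
def MemW (m : ℕ) (q : ℝ) (A : ℂ → B) : Prop :=
  ∀ k ≤ m, IntegrableOn (fun z => ‖iteratedFDeriv ℝ k A z‖ ^ q) DD volume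

/-- Iterates of ∂̄. -/
def dbarIter : ℕ → (ℂ → B) → (ℂ → B)
  | 0, f => f
  | n + 1, f => dbar (dbarIter n f)

/-- The operator ∂̄ − A. -/
def aop (A : ℂ → B) (f : ℂ → B) : ℂ → B := fun z => dbar f z - bmul (A z) (f z)

/-- Iterates of ∂̄ − A. -/
def aopIter (A : ℂ → B) : ℕ → (ℂ → B) → (ℂ → B)
  | 0, f => f
  | n + 1, f => aop A (aopIter A n f)

/-- The operator ∂̄ − A − B C(·). -/
def vop (A Bc : ℂ → B) (f : ℂ → B) : ℂ → B :=
  fun z => dbar f z - bmul (A z) (f z) - bmul (Bc z) (bconj (f z))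

/-- Iterates of ∂̄ − A − B C(·). -/
def vopIter (A Bc : ℂ → B) : ℕ → (ℂ → B) → (ℂ → B)
  | 0, f => f
  | n + 1, f => vop A Bc (vopIter A Bc n f)

/-- Bicomplexification û of u = x + iy is x + jy. -/
def hatc (u : ℂ) : B := ((u.re : ℂ), (u.im : ℂ))

/-- The bicomplexification (z*)ˆ = x − jy of z* = x − iy. -/
def hatConj (z : ℂ) : B := ((z.re : ℂ), (-z.im : ℂ))

end Bicomplex
open Bicomplex in
/-- ‖wv‖_𝔹 ≤ √2 ‖w‖_𝔹 ‖v‖_𝔹. -/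
theorem bnorm_mul_le (w v : B) :
    bnorm (bmul w v) ≤ Real.sqrt 2 * bnorm w * bnorm v := by
  have hp : plus (bmul w v) = plus w * plus v := by
    simp only [plus, bmul]
    ring_nf
    simp [Complex.I_sq]
    ring
  have hm : minus (bmul w v) = minus w * minus v := by
    simp only [minus, bmul]
    ring_nf
    simp [Complex.I_sq]
    ring
  set a := ‖plus w‖
  set b := ‖minus w‖
  set c := ‖plus v‖
  set d := ‖minus v‖
  unfold bnorm
  rw [hp, hm, norm_mul, norm_mul]
  have h2 : (0:ℝ) ≤ 2 := by norm_num
  rw [← Real.sqrt_mul h2, ← Real.sqrt_mul (by positivity)]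
  apply Real.sqrt_le_sqrt
  have ha : 0 ≤ a := norm_nonneg _
  have hb : 0 ≤ b := norm_nonneg _
  have hc : 0 ≤ c := norm_nonneg _
  have hd : 0 ≤ d := norm_nonneg _
  nlinarith [sq_nonneg (b*c), sq_nonneg (a*d)]
end
end

section
/- For 0 < p < ∞, a function f = p⁺f⁺ + p⁻f⁻ in Hol(D,𝔹) belongs to the bicomplex Hardy space H^p(D,𝔹) if and only if (f⁺)* and f⁻ belong to the classical holomorphic Hardy space H^p(D). -/
open Complex MeasureTheory Set Filter intervalIntegral

noncomputable section

namespace Bicomplex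

/-! ### Auxiliary lemmas -/

lemma bnorm_nonneg (w : B) : 0 ≤ bnorm w := Real.sqrt_nonneg _

lemma abs_plus_le (w : B) : ‖plus w‖ ≤ Real.sqrt 2 * bnorm w := by
  rw [bnorm, ← Real.sqrt_mul (by norm_num : (0:ℝ) ≤ 2)]
  have h2 : (2:ℝ) * ((‖plus w‖ ^ 2 + ‖minus w‖ ^ 2) / 2)
      = ‖plus w‖ ^ 2 + ‖minus w‖ ^ 2 := by ring
  rw [h2]
  calc ‖plus w‖ = Real.sqrt (‖plus w‖ ^ 2) :=
        (Real.sqrt_sq (norm_nonneg _)).symm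
    _ ≤ _ := Real.sqrt_le_sqrt (by nlinarith [norm_nonneg (minus w)])

lemma abs_minus_le (w : B) : ‖minus w‖ ≤ Real.sqrt 2 * bnorm w := by
  rw [bnorm, ← Real.sqrt_mul (by norm_num : (0:ℝ) ≤ 2)]
  have h2 : (2:ℝ) * ((‖plus w‖ ^ 2 + ‖minus w‖ ^ 2) / 2)
      = ‖plus w‖ ^ 2 + ‖minus w‖ ^ 2 := by ring
  rw [h2]
  calc ‖minus w‖ = Real.sqrt (‖minus w‖ ^ 2) :=
        (Real.sqrt_sq (norm_nonneg _)).symm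
    _ ≤ _ := Real.sqrt_le_sqrt (by nlinarith [norm_nonneg (plus w)])

lemma bnorm_le_max (w : B) :
    bnorm w ≤ max (‖plus w‖) (‖minus w‖) := by
  rw [bnorm]
  have hm : 0 ≤ max (‖plus w‖) (‖minus w‖) :=
    le_trans (norm_nonneg _) (le_max_left _ _)
  calc Real.sqrt ((‖plus w‖ ^ 2 + ‖minus w‖ ^ 2) / 2)
      ≤ Real.sqrt ((max (‖plus w‖) (‖minus w‖)) ^ 2) := by
        apply Real.sqrt_le_sqrt
        have h1 := le_max_left (‖plus w‖) (‖minus w‖)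
        have h2 := le_max_right (‖plus w‖) (‖minus w‖)
        nlinarith [norm_nonneg (plus w),
          norm_nonneg (minus w)]
    _ = _ := Real.sqrt_sq hm

lemma abs_plus_rpow_le {p : ℝ} (hp : 0 < p) (w : B) :
    ‖plus w‖ ^ p ≤ Real.sqrt 2 ^ p * bnorm w ^ p := by
  rw [← Real.mul_rpow (Real.sqrt_nonneg _) (bnorm_nonneg w)]
  exact Real.rpow_le_rpow (norm_nonneg _) (abs_plus_le w) hp.le

lemma abs_minus_rpow_le {p : ℝ} (hp : 0 < p) (w : B) :
    ‖minus w‖ ^ p ≤ Real.sqrt 2 ^ p * bnorm w ^ p := by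
  rw [← Real.mul_rpow (Real.sqrt_nonneg _) (bnorm_nonneg w)]
  exact Real.rpow_le_rpow (norm_nonneg _) (abs_minus_le w) hp.le

lemma bnorm_rpow_le {p : ℝ} (hp : 0 < p) (w : B) :
    bnorm w ^ p ≤ ‖plus w‖ ^ p + ‖minus w‖ ^ p := by
  have h1 : bnorm w ^ p ≤ (max (‖plus w‖) (‖minus w‖)) ^ p :=
    Real.rpow_le_rpow (bnorm_nonneg w) (bnorm_le_max w) hp.le
  rcases le_total (‖plus w‖) (‖minus w‖) with h | h
  · rw [max_eq_right h] at h1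
    exact h1.trans (le_add_of_nonneg_left (Real.rpow_nonneg (norm_nonneg _) _))
  · rw [max_eq_left h] at h1
    exact h1.trans (le_add_of_nonneg_right (Real.rpow_nonneg (norm_nonneg _) _))

lemma continuous_rpow_const {p : ℝ} (hp : 0 < p) : Continuous (fun x : ℝ => x ^ p) := by
  rw [continuous_iff_continuousAt]
  exact fun x => Real.continuousAt_rpow_const x p (Or.inr hp.le)

lemma continuous_plus : Continuous plus :=
  continuous_fst.sub (continuous_const.mul continuous_snd)

lemma continuous_minus : Continuous minus :=
  continuous_fst.add (continuous_const.mul continuous_snd)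

lemma continuous_bnorm : Continuous bnorm := by
  apply Real.continuous_sqrt.comp
  apply Continuous.div_const
  exact ((continuous_norm.comp continuous_plus).pow 2).add
    ((continuous_norm.comp continuous_minus).pow 2)

lemma continuous_circ (r : ℝ) : Continuous (fun θ : ℝ => circ r θ) := by
  unfold circ
  exact continuous_const.mul (Complex.continuous_exp.comp
    (Complex.continuous_ofReal.mul continuous_const))

lemma circ_mem_DD {r : ℝ} (hr0 : 0 < r) (hr1 : r < 1) (θ : ℝ) : circ r θ ∈ DD := by
  simp only [DD, Metric.mem_ball, dist_zero_right, circ, norm_mul,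
    Complex.norm_exp_ofReal_mul_I, mul_one, Complex.norm_real, Real.norm_eq_abs]
  rwa [abs_of_pos hr0]

lemma continuous_f_circ {f : ℂ → B} (hdiff : DifferentiableOn ℝ f DD) {r : ℝ}
    (hr0 : 0 < r) (hr1 : r < 1) : Continuous (fun θ : ℝ => f (circ r θ)) :=
  hdiff.continuousOn.comp_continuous (continuous_circ r) (circ_mem_DD hr0 hr1)

/-- The CR equations from `dbar f = 0`. -/
lemma cr_eqs {f : ℂ → B} {z : ℂ} (hz : z ∈ DD) (hdiff : DifferentiableOn ℝ f DD)
    (hhol : ∀ z ∈ DD, dbar f z = 0) :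
    (fderiv ℝ f z I).2 = (fderiv ℝ f z 1).1 ∧ (fderiv ℝ f z I).1 = -(fderiv ℝ f z 1).2 := by
  have h := hhol z hz
  rw [dbar, smul_eq_zero] at h
  rcases h with h | h
  · exfalso; norm_num at h
  · have h1 : (fderiv ℝ f z 1).1 - (fderiv ℝ f z I).2 = 0 := by
      have := congrArg Prod.fst h
      simpa [dxd, dyd, jB, bmul, sub_eq_add_neg] using this
    have h2 : (fderiv ℝ f z 1).2 + (fderiv ℝ f z I).1 = 0 := by
      have := congrArg Prod.snd h
      simpa [dxd, dyd, jB, bmul] using this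
    exact ⟨by linear_combination -h1, by linear_combination h2⟩

/-- From real differentiability and the CR condition, complex differentiability. -/
lemma diffAt_of_cr {g : ℂ → ℂ} {z : ℂ} {G : ℂ →L[ℝ] ℂ} (hg : HasFDerivAt g G z)
    (hcr : G Complex.I = Complex.I * G 1) : DifferentiableAt ℂ g z := by
  rw [differentiableAt_iff_restrictScalars ℝ hg.differentiableAt]
  refine ⟨(G 1) • ContinuousLinearMap.id ℂ ℂ, ?_⟩
  rw [hg.fderiv]
  ext v
  have hv : v = (v.re : ℝ) • (1:ℂ) + (v.im : ℝ) • Complex.I := by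
    simp [Complex.real_smul]
  have h1 : G v = (v.re : ℝ) • G 1 + (v.im : ℝ) • G Complex.I := by
    conv_lhs => rw [hv]
    rw [map_add, G.map_smul, G.map_smul]
  simp only [ContinuousLinearMap.coe_restrictScalars', ContinuousLinearMap.smul_apply,
    ContinuousLinearMap.coe_id', id_eq, smul_eq_mul]
  rw [h1, hcr, Complex.real_smul, Complex.real_smul]
  linear_combination (-(G 1)) * (Complex.re_add_im v)

/-- minus ∘ f is complex differentiable. -/
lemma diffAt_minus {f : ℂ → B} {z : ℂ} (hz : z ∈ DD) (hdiff : DifferentiableOn ℝ f DD)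
    (hhol : ∀ z ∈ DD, dbar f z = 0) :
    DifferentiableAt ℂ (fun z => minus (f z)) z := by
  have hf : DifferentiableAt ℝ f z := hdiff.differentiableAt (Metric.isOpen_ball.mem_nhds hz)
  obtain ⟨e1, e2⟩ := cr_eqs hz hdiff hhol
  let L : B →L[ℝ] ℂ :=
    ContinuousLinearMap.fst ℝ ℂ ℂ + Complex.I • ContinuousLinearMap.snd ℝ ℂ ℂ
  have hL : ∀ w : B, L w = minus w := by
    intro w
    simp [L, minus, ContinuousLinearMap.add_apply, ContinuousLinearMap.smul_apply, smul_eq_mul]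
  have hg : HasFDerivAt (fun w => minus (f w)) ((L.comp (fderiv ℝ f z))) z := by
    have h := L.hasFDerivAt.comp z hf.hasFDerivAt
    have heq : (fun w => minus (f w)) = L ∘ f := funext fun w => (hL (f w)).symm
    rw [heq]
    exact h
  apply diffAt_of_cr hg
  show L (fderiv ℝ f z Complex.I) = Complex.I * L (fderiv ℝ f z 1)
  rw [hL, hL]
  simp only [minus]
  rw [e1, e2]
  linear_combination (-((fderiv ℝ f z) 1).2) * Complex.I_sq

lemma diffAt_conj_plus {f : ℂ → B} {z : ℂ} (hz : z ∈ DD) (hdiff : DifferentiableOn ℝ f DD)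
    (hhol : ∀ z ∈ DD, dbar f z = 0) :
    DifferentiableAt ℂ (fun z => starRingEnd ℂ (plus (f z))) z := by
  have hf : DifferentiableAt ℝ f z := hdiff.differentiableAt (Metric.isOpen_ball.mem_nhds hz)
  obtain ⟨e1, e2⟩ := cr_eqs hz hdiff hhol
  let L : B →L[ℝ] ℂ := Complex.conjCLE.toContinuousLinearMap.comp
    (ContinuousLinearMap.fst ℝ ℂ ℂ - Complex.I • ContinuousLinearMap.snd ℝ ℂ ℂ)
  have hL : ∀ w : B, L w = starRingEnd ℂ (plus w) := by
    intro w
    simp [L, plus, ContinuousLinearMap.sub_apply, ContinuousLinearMap.smul_apply, smul_eq_mul]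
  have hg : HasFDerivAt (fun w => starRingEnd ℂ (plus (f w))) ((L.comp (fderiv ℝ f z))) z := by
    have h := L.hasFDerivAt.comp z hf.hasFDerivAt
    have heq : (fun w => starRingEnd ℂ (plus (f w))) = L ∘ f := funext fun w => (hL (f w)).symm
    rw [heq]
    exact h
  apply diffAt_of_cr hg
  show L (fderiv ℝ f z Complex.I) = Complex.I * L (fderiv ℝ f z 1)
  rw [hL, hL]
  simp only [plus]
  rw [e1, e2]
  simp only [map_sub, map_neg, map_mul, Complex.conj_I]
  linear_combination (-(starRingEnd ℂ ((fderiv ℝ f z) 1).2)) * Complex.I_sq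

end Bicomplex
open Bicomplex in
/-- f ∈ H^p(D,𝔹) iff (f⁺)* and f⁻ belong to the classical H^p(D). -/
theorem bicomplex_hardy_iff_components (p : ℝ) (hp : 0 < p) (f : ℂ → B)
    (hdiff : DifferentiableOn ℝ f DD) (hhol : ∀ z ∈ DD, dbar f z = 0) :
    HardyBound p f ↔
      ((DifferentiableOn ℂ (fun z => starRingEnd ℂ (plus (f z))) DD ∧
        CHardyBound p (fun z => starRingEnd ℂ (plus (f z)))) ∧
       (DifferentiableOn ℂ (fun z => minus (f z)) DD ∧
        CHardyBound p (fun z => minus (f z)))) := by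
  have hd1 : DifferentiableOn ℂ (fun z => starRingEnd ℂ (plus (f z))) DD :=
    fun z hz => (diffAt_conj_plus hz hdiff hhol).differentiableWithinAt
  have hd2 : DifferentiableOn ℂ (fun z => minus (f z)) DD :=
    fun z hz => (diffAt_minus hz hdiff hhol).differentiableWithinAt
  have h2pi : (0:ℝ) ≤ 2 * Real.pi := Real.two_pi_pos.le
  constructor
  · rintro ⟨M, hM⟩
    have hC : (0:ℝ) ≤ Real.sqrt 2 ^ p := Real.rpow_nonneg (Real.sqrt_nonneg 2) p
    refine ⟨⟨hd1, Real.sqrt 2 ^ p * M, fun r hr0 hr1 => ?_⟩,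
      hd2, Real.sqrt 2 ^ p * M, fun r hr0 hr1 => ?_⟩
    · have hcont := continuous_f_circ hdiff hr0 hr1
      have hib : IntervalIntegrable
          (fun θ => Real.sqrt 2 ^ p * bnorm (f (circ r θ)) ^ p) volume 0 (2 * Real.pi) :=
        (continuous_const.mul ((continuous_rpow_const hp).comp
          (continuous_bnorm.comp hcont))).intervalIntegrable _ _
      have hia : IntervalIntegrable
          (fun θ => ‖starRingEnd ℂ (plus (f (circ r θ)))‖ ^ p) volume
          0 (2 * Real.pi) :=
        ((continuous_rpow_const hp).comp (continuous_norm.comp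
          (Complex.continuous_conj.comp (continuous_plus.comp hcont)))).intervalIntegrable _ _
      calc (∫ θ in (0:ℝ)..(2 * Real.pi),
            ‖starRingEnd ℂ (plus (f (circ r θ)))‖ ^ p)
          ≤ ∫ θ in (0:ℝ)..(2 * Real.pi), Real.sqrt 2 ^ p * bnorm (f (circ r θ)) ^ p :=
            intervalIntegral.integral_mono_on h2pi hia hib (fun θ _ => by
              rw [Complex.norm_conj]; exact abs_plus_rpow_le hp _)
        _ = Real.sqrt 2 ^ p * ∫ θ in (0:ℝ)..(2 * Real.pi), bnorm (f (circ r θ)) ^ p :=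
            intervalIntegral.integral_const_mul _ _
        _ ≤ Real.sqrt 2 ^ p * M := mul_le_mul_of_nonneg_left (hM r hr0 hr1) hC
    · have hcont := continuous_f_circ hdiff hr0 hr1
      have hib : IntervalIntegrable
          (fun θ => Real.sqrt 2 ^ p * bnorm (f (circ r θ)) ^ p) volume 0 (2 * Real.pi) :=
        (continuous_const.mul ((continuous_rpow_const hp).comp
          (continuous_bnorm.comp hcont))).intervalIntegrable _ _
      have hia : IntervalIntegrable
          (fun θ => ‖minus (f (circ r θ))‖ ^ p) volume 0 (2 * Real.pi) :=
        ((continuous_rpow_const hp).comp (continuous_norm.comp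
          (continuous_minus.comp hcont))).intervalIntegrable _ _
      calc (∫ θ in (0:ℝ)..(2 * Real.pi), ‖minus (f (circ r θ))‖ ^ p)
          ≤ ∫ θ in (0:ℝ)..(2 * Real.pi), Real.sqrt 2 ^ p * bnorm (f (circ r θ)) ^ p :=
            intervalIntegral.integral_mono_on h2pi hia hib
              (fun θ _ => abs_minus_rpow_le hp _)
        _ = Real.sqrt 2 ^ p * ∫ θ in (0:ℝ)..(2 * Real.pi), bnorm (f (circ r θ)) ^ p :=
            intervalIntegral.integral_const_mul _ _
        _ ≤ Real.sqrt 2 ^ p * M := mul_le_mul_of_nonneg_left (hM r hr0 hr1) hC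
  · rintro ⟨⟨-, M1, h1⟩, -, M2, h2⟩
    refine ⟨M1 + M2, fun r hr0 hr1 => ?_⟩
    have hcont := continuous_f_circ hdiff hr0 hr1
    have hib : IntervalIntegrable (fun θ => bnorm (f (circ r θ)) ^ p) volume 0 (2 * Real.pi) :=
      ((continuous_rpow_const hp).comp (continuous_bnorm.comp hcont)).intervalIntegrable _ _
    have hi1 : IntervalIntegrable
        (fun θ => ‖starRingEnd ℂ (plus (f (circ r θ)))‖ ^ p) volume
        0 (2 * Real.pi) :=
      ((continuous_rpow_const hp).comp (continuous_norm.comp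
        (Complex.continuous_conj.comp (continuous_plus.comp hcont)))).intervalIntegrable _ _
    have hi2 : IntervalIntegrable
        (fun θ => ‖minus (f (circ r θ))‖ ^ p) volume 0 (2 * Real.pi) :=
      ((continuous_rpow_const hp).comp (continuous_norm.comp
        (continuous_minus.comp hcont))).intervalIntegrable _ _
    calc (∫ θ in (0:ℝ)..(2 * Real.pi), bnorm (f (circ r θ)) ^ p)
        ≤ ∫ θ in (0:ℝ)..(2 * Real.pi),
            (‖starRingEnd ℂ (plus (f (circ r θ)))‖ ^ p +
              ‖minus (f (circ r θ))‖ ^ p) :=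
          intervalIntegral.integral_mono_on h2pi hib (hi1.add hi2) (fun θ _ => by
            rw [Complex.norm_conj]; exact bnorm_rpow_le hp _)
      _ = (∫ θ in (0:ℝ)..(2 * Real.pi),
            ‖starRingEnd ℂ (plus (f (circ r θ)))‖ ^ p) +
          ∫ θ in (0:ℝ)..(2 * Real.pi), ‖minus (f (circ r θ))‖ ^ p :=
          intervalIntegral.integral_add hi1 hi2
      _ ≤ M1 + M2 := add_le_add (h1 r hr0 hr1) (h2 r hr0 hr1)
end
end
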